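/- Let t be a positive integer, G a flower group with pistil C₀ and petals C₁, …, C_k, and fix 1 ≤ i ≤ k. If h ∈ G satisfies h^t ∈ C_i \ C₀, then h ∈ C_i \ C₀. -/

import Mathlib

/-- A cyclic subgroup `C` of `G` is a μ-subgroup if it is not contained in any cyclic
subgroup of `G` other than `C` itself. -/
def IsMuSubgroup {G : Type*} [Group G] (C : Subgroup G) : Prop :=
  IsCyclic ↥C ∧ ∀ K : Subgroup G, IsCyclic ↥K → C ≤ K → C = K

/-- A noncyclic group `G` is a flower group with pistil `C0` if any two distinct
μ-subgroups of `G` intersect exactly in `C0`. -/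
def IsFlowerGroup {G : Type*} [Group G] (C0 : Subgroup G) : Prop :=
  ¬ IsCyclic G ∧
    ∀ C C' : Subgroup G, IsMuSubgroup C → IsMuSubgroup C' → C ≠ C' → C ⊓ C' = C0

/-- If G is a flower group with pistil C₀, C_i is a petal, and h^t ∈ C_i \ C₀,
then h ∈ C_i \ C₀. -/
theorem stmt13 (t : ℕ) (ht : 0 < t) {G : Type*} [Group G] [Finite G]
    (C0 : Subgroup G) (hG : IsFlowerGroup C0)
    (C : Subgroup G) (hC : IsMuSubgroup C)
    (h : G) (h1 : h ^ t ∈ C) (h2 : h ^ t ∉ C0) :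
    h ∈ C ∧ h ∉ C0 := by
  -- Find a μ-subgroup containing ⟨h⟩
  have hfin : (Set.univ : Set (Subgroup G)).Finite := Set.finite_univ
  set S : Set (Subgroup G) := {K | IsCyclic ↥K ∧ Subgroup.zpowers h ≤ K}
  have hSfin : S.Finite := Set.Finite.subset hfin (by simp)
  have hcyc : IsCyclic ↥(Subgroup.zpowers h) := by
    refine ⟨⟨h, Subgroup.mem_zpowers h⟩, ?_⟩
    rintro ⟨x, hx⟩
    obtain ⟨k, rfl⟩ := Subgroup.mem_zpowers_iff.mp hx
    exact ⟨k, by ext; simp⟩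
  have hSne : S.Nonempty := ⟨Subgroup.zpowers h, ⟨hcyc, le_rfl⟩⟩
  obtain ⟨K, hKS, hKmax⟩ : ∃ K ∈ S, ∀ K' ∈ S, id K ≤ id K' → id K = id K' := by
    obtain ⟨K, hKS, hKmax⟩ := Set.Finite.exists_maximalFor id S hSfin hSne
    exact ⟨K, hKS, fun K' hK' hle => le_antisymm hle (hKmax hK' hle)⟩
  have hKmu : IsMuSubgroup K := by
    refine ⟨hKS.1, fun K' hK'cyc hle => ?_⟩
    exact hKmax K' ⟨hK'cyc, hKS.2.trans hle⟩ hle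
  have hhK : h ∈ K := hKS.2 (Subgroup.mem_zpowers h)
  have hKC : K = C := by
    by_contra hne
    have := hG.2 K C hKmu hC hne
    have : h ^ t ∈ C0 := this ▸ (Subgroup.mem_inf.mpr ⟨K.pow_mem hhK t, h1⟩)
    exact h2 this
  subst hKC
  refine ⟨hhK, fun hh0 => h2 (C0.pow_mem hh0 t)⟩
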